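/- arXiv:1702.05599 — 2 statements merged into one kernel-verified Lean document; each statement's English description precedes it below -/
import Mathlib

section
/- Let F be a centred second-order process on X × Y with separable covariance κ{(x,y),(x',y')} = κ_x(x,x')κ_y(y,y'). Then for any x, x' ∈ X and y, y' ∈ Y with κ{(x',y),(x',y)} > 0, the residual of F(x,y) after projecting onto F(x',y) is uncorrelated with F(x',y'): E[ (F(x,y) − α F(x',y)) F(x',y') ] = 0, where α = κ{(x,y),(x',y)} / κ{(x',y),(x',y)} is the least-squares projection coefficient. -/
open MeasureTheory

theorem stmt_6 {Ω : Type*} [MeasurableSpace Ω] (μ : Measure Ω) [IsProbabilityMeasure μ]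
    {X Y : Type*} (F : X × Y → Ω → ℝ) (κx : X → X → ℝ) (κy : Y → Y → ℝ)
    (hInt : ∀ p q, Integrable (fun ω => F p ω * F q ω) μ)
    (hmean : ∀ p, ∫ ω, F p ω ∂μ = 0)
    (hsep : ∀ p q, ∫ ω, F p ω * F q ω ∂μ = κx p.1 q.1 * κy p.2 q.2)
    (x x' : X) (y y' : Y)
    (hpos : 0 < ∫ ω, F (x', y) ω * F (x', y) ω ∂μ) :
    ∫ ω, (F (x, y) ω -
        ((∫ ω', F (x, y) ω' * F (x', y) ω' ∂μ) /
          (∫ ω', F (x', y) ω' * F (x', y) ω' ∂μ)) * F (x', y) ω) * F (x', y') ω ∂μ = 0 := by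
  set α : ℝ := (∫ ω', F (x, y) ω' * F (x', y) ω' ∂μ) /
      (∫ ω', F (x', y) ω' * F (x', y) ω' ∂μ) with hα
  have h1 : ∀ ω, (F (x, y) ω - α * F (x', y) ω) * F (x', y') ω =
      F (x, y) ω * F (x', y') ω - α * (F (x', y) ω * F (x', y') ω) := by
    intro ω; ring
  simp_rw [h1]
  rw [integral_sub (hInt _ _) ((hInt (x', y) (x', y')).const_mul α),
    MeasureTheory.integral_const_mul, hsep, hsep, hα, hsep, hsep]
  have hκx : κx x' x' ≠ 0 := by
    intro h
    have := hpos; rw [hsep] at this; simp at this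
    rw [h] at this; simp at this
  have hκy : κy y y ≠ 0 := by
    intro h
    have := hpos; rw [hsep] at this; simp at this
    rw [h] at this; simp at this
  field_simp
  ring
end

section
/- If F is a centred Gaussian process on X × Y with separable covariance function κ{(x,y),(x',y')} = κ_x(x,x')κ_y(y,y'), then for all x,x' ∈ X and y,y' ∈ Y with Var(F(x',y)) > 0, the conditional covariance cov{F(x,y), F(x',y') | F(x',y)} equals 0. -/
open MeasureTheory ProbabilityTheory

theorem stmt_7 {Ω : Type*} [MeasurableSpace Ω] (μ : Measure Ω) [IsProbabilityMeasure μ]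
    {X Y : Type*} (F : X × Y → Ω → ℝ) (κx : X → X → ℝ) (κy : Y → Y → ℝ)
    (hmeas : ∀ p, Measurable (F p))
    (hGauss : ∀ (n : ℕ) (c : Fin n → ℝ) (p : Fin n → X × Y),
      ∃ (m : ℝ) (v : NNReal),
        μ.map (fun ω => ∑ i, c i * F (p i) ω) = gaussianReal m v)
    (hmean : ∀ p, ∫ ω, F p ω ∂μ = 0)
    (hsep : ∀ p q, ∫ ω, F p ω * F q ω ∂μ = κx p.1 q.1 * κy p.2 q.2)
    (x x' : X) (y y' : Y)
    (hpos : 0 < ∫ ω, F (x', y) ω * F (x', y) ω ∂μ) :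
    (∫ ω, F (x, y) ω * F (x', y') ω ∂μ) -
      (∫ ω, F (x, y) ω * F (x', y) ω ∂μ) *
        (∫ ω, F (x', y') ω * F (x', y) ω ∂μ) /
          (∫ ω, F (x', y) ω * F (x', y) ω ∂μ) = 0 := by
  have hsym : κx x' x' * κy y' y = κx x' x' * κy y y' := by
    rw [← hsep (x',y') (x',y), ← hsep (x',y) (x',y')]
    simp [mul_comm]
  rw [hsep, hsep, hsep, hsep] at *
  simp only at hpos ⊢
  have hx : κx x' x' ≠ 0 := fun h => by simp [h] at hpos
  have hy : κy y y ≠ 0 := fun h => by simp [h] at hpos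
  have hy' : κy y' y = κy y y' := mul_left_cancel₀ hx hsym
  rw [hy']
  field_simp
  ring
end
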